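/- Let e₀ be a minimal projection in A, let x ∈ A satisfy e₀x = x, and let y ∈ A satisfy y* = y, y(xx*) = (xx*)y, and ye₀ = e₀y. Suppose that (xx*)y² is a nonzero projection. Then (e₀ye₀)(xx*)(e₀ye₀) = e₀. -/
import Mathlib


/-- A computation in a `*`-ring: if `e₀` is a minimal projection, `e₀x = x`,
`y* = y`, `y` commutes with `xx*` and with `e₀`, and `(xx*)y²` is a nonzero
projection, then `(e₀ye₀)(xx*)(e₀ye₀) = e₀`. -/
theorem minimal_projection_normalization {A : Type*} [Ring A] [StarRing A]
    (e₀ : A) (he₀_idem : e₀ * e₀ = e₀) (he₀_star : star e₀ = e₀) (he₀_ne : e₀ ≠ 0)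
    (hmin : ∀ p : A, p * p = p → star p = p → p * e₀ = p → e₀ * p = p →
      p = 0 ∨ p = e₀)
    (x : A) (hx : e₀ * x = x)
    (y : A) (hy_star : star y = y)
    (hy_comm : y * (x * star x) = (x * star x) * y)
    (hy_e₀ : y * e₀ = e₀ * y)
    (hq_idem : (x * star x * (y * y)) * (x * star x * (y * y)) = x * star x * (y * y))
    (hq_star : star (x * star x * (y * y)) = x * star x * (y * y))
    (hq_ne : x * star x * (y * y) ≠ 0) :
    (e₀ * y * e₀) * (x * star x) * (e₀ * y * e₀) = e₀ := by
  set a := x * star x with ha_def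
  have has : star a = a := by simp [ha_def, star_mul, mul_assoc]
  have hea : e₀ * a = a := by rw [ha_def, ← mul_assoc, hx]
  have hae : a * e₀ = a := by
    have := congrArg star hea
    rwa [star_mul, has, he₀_star] at this
  -- q := a * (y*y) equals e₀ by minimality
  have hqe : a * (y * y) * e₀ = a * (y * y) := by
    rw [mul_assoc a, mul_assoc y, hy_e₀, ← mul_assoc y, hy_e₀, ← mul_assoc,
      ← mul_assoc, hae, mul_assoc]
  have heq : e₀ * (a * (y * y)) = a * (y * y) := by rw [← mul_assoc, hea]
  have hq : a * (y * y) = e₀ := by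
    rcases hmin (a * (y * y)) hq_idem hq_star hqe heq with h | h
    · exact absurd h hq_ne
    · exact h
  -- simplify e₀ * y * e₀
  have h1 : e₀ * y * e₀ = e₀ * y := by rw [mul_assoc, hy_e₀, ← mul_assoc, he₀_idem]
  have h2 : e₀ * y * e₀ = y * e₀ := by rw [h1, hy_e₀]
  calc (e₀ * y * e₀) * a * (e₀ * y * e₀)
      = (e₀ * y) * a * (y * e₀) := by nth_rewrite 2 [h2]; rw [h1]
    _ = e₀ * (y * a) * y * e₀ := by simp [mul_assoc]
    _ = e₀ * (a * (y * y)) * e₀ := by rw [hy_comm]; simp [mul_assoc]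
    _ = e₀ := by rw [hq, he₀_idem, he₀_idem]
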